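/- Let R : ℝ² → ℝ be a smooth, radially symmetric, rapidly decaying function. Then ∫_{ℝ²} (Δ²(R²))·R·(R + ρ ∂_ρ R) dξ = (3/2) ∫_{ℝ²} (Δ(R²))² dξ. In particular this integral is nonnegative, and strictly positive unless R² is harmonic. -/

import Mathlib

open MeasureTheory Set

noncomputable section

abbrev E2 : Type := EuclideanSpace ℝ (Fin 2)

/-- The Laplacian on `ℝ²`, as the trace of the second derivative. -/
def lap {F : Type*} [NormedAddCommGroup F] [NormedSpace ℝ F] (f : E2 → F) (x : E2) : F :=
  ∑ i : Fin 2, iteratedFDeriv ℝ 2 f x ![EuclideanSpace.single i 1, EuclideanSpace.single i 1]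

namespace Stmt3Aux

open SchwartzMap Metric

lemma schw_tg (f : 𝓢(E2, ℝ)) : Function.HasTemperateGrowth (⇑f) := by
  refine ⟨f.smooth ⊤, fun n => ?_⟩
  obtain ⟨C, -, hC⟩ := f.decay 0 n
  exact ⟨0, C, fun x => by simpa using hC x⟩

noncomputable def pmul (f g : 𝓢(E2,ℝ)) : 𝓢(E2,ℝ) :=
  bilinLeftCLM (ContinuousLinearMap.mul ℝ ℝ) (schw_tg g) f

@[simp] lemma pmul_apply (f g : 𝓢(E2,ℝ)) (x : E2) : pmul f g x = f x * g x := rfl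

noncomputable def xmul (i : Fin 2) (f : 𝓢(E2,ℝ)) : 𝓢(E2,ℝ) :=
  bilinLeftCLM (ContinuousLinearMap.mul ℝ ℝ)
    ((EuclideanSpace.proj i : E2 →L[ℝ] ℝ).hasTemperateGrowth) f

@[simp] lemma xmul_apply (i : Fin 2) (f : 𝓢(E2,ℝ)) (x : E2) : xmul i f x = f x * x i := rfl

noncomputable def D (i : Fin 2) (f : 𝓢(E2,ℝ)) : 𝓢(E2,ℝ) :=
  LineDeriv.lineDerivOpCLM ℝ 𝓢(E2,ℝ) (EuclideanSpace.single i 1 : E2) f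

@[simp] lemma D_apply (i : Fin 2) (f : 𝓢(E2,ℝ)) (x : E2) :
    D i f x = fderiv ℝ f x (EuclideanSpace.single i 1) := rfl

lemma D_add (i : Fin 2) (f g : 𝓢(E2,ℝ)) : D i (f + g) = D i f + D i g :=
  map_add (LineDeriv.lineDerivOpCLM ℝ 𝓢(E2,ℝ) (EuclideanSpace.single i 1 : E2)) f g

lemma xmul_add (j : Fin 2) (f g : 𝓢(E2,ℝ)) : xmul j (f + g) = xmul j f + xmul j g :=
  map_add _ f g

lemma pmul_comm (f g : 𝓢(E2,ℝ)) : pmul f g = pmul g f := by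
  ext x; simp [mul_comm]

lemma pmul_add_left (f g h : 𝓢(E2,ℝ)) : pmul (f + g) h = pmul f h + pmul g h :=
  map_add _ f g

lemma pmul_add_right (f g h : 𝓢(E2,ℝ)) : pmul f (g + h) = pmul f g + pmul f h := by
  ext x; simp [mul_add]

lemma pmul_smul_right (c : ℝ) (f g : 𝓢(E2,ℝ)) : pmul f (c • g) = c • pmul f g := by
  ext x; simp [SchwartzMap.smul_apply]; ring

lemma pmul_xmul (f : 𝓢(E2,ℝ)) (j : Fin 2) (g : 𝓢(E2,ℝ)) :
    pmul f (xmul j g) = xmul j (pmul f g) := by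
  ext x; simp; ring

lemma D_pmul (i : Fin 2) (f g : 𝓢(E2,ℝ)) :
    D i (pmul f g) = pmul (D i f) g + pmul f (D i g) := by
  ext x
  have h := fderiv_mul (𝕜 := ℝ) (f.differentiable.differentiableAt (x := x))
    (g.differentiable.differentiableAt (x := x))
  have h2 : fderiv ℝ (fun y => f y * g y) x (EuclideanSpace.single i 1)
      = f x * fderiv ℝ g x (EuclideanSpace.single i 1)
        + g x * fderiv ℝ f x (EuclideanSpace.single i 1) := by
    rw [show (fun y => f y * g y) = ⇑f * ⇑g from rfl, h]; simp
  simp only [D_apply, pmul_apply, SchwartzMap.add_apply]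
  rw [show (⇑(pmul f g)) = fun y => f y * g y from rfl, h2]
  ring

lemma D_xmul (i j : Fin 2) (f : 𝓢(E2,ℝ)) :
    D i (xmul j f) = (if i = j then f else 0) + xmul j (D i f) := by
  ext x
  have hproj : DifferentiableAt ℝ (fun y : E2 => y j) x :=
    (EuclideanSpace.proj j : E2 →L[ℝ] ℝ).differentiableAt
  have h := fderiv_mul (𝕜 := ℝ) (f.differentiable.differentiableAt (x := x)) hproj
  have h2 : fderiv ℝ (fun y => f y * y j) x (EuclideanSpace.single i 1)
      = f x * fderiv ℝ (fun y : E2 => y j) x (EuclideanSpace.single i 1)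
        + x j * fderiv ℝ f x (EuclideanSpace.single i 1) := by
    rw [show (fun y => f y * y j) = ⇑f * fun y : E2 => y j from rfl, h]; simp
  have h3 : fderiv ℝ (fun y : E2 => y j) x (EuclideanSpace.single i 1)
      = if i = j then 1 else 0 := by
    rw [show (fun y : E2 => y j) = ⇑(EuclideanSpace.proj j : E2 →L[ℝ] ℝ) from rfl,
      ContinuousLinearMap.fderiv]
    simp [EuclideanSpace.single_apply, eq_comm]
  simp only [D_apply, SchwartzMap.add_apply, xmul_apply]
  rw [show (⇑(xmul j f)) = fun y => f y * y j from rfl, h2, h3]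
  split <;> simp <;> ring

lemma fderiv_fderiv_apply (f : 𝓢(E2,ℝ)) (x : E2) (v w : E2) :
    fderiv ℝ (fun y => fderiv ℝ f y w) x v = fderiv ℝ (fderiv ℝ f) x v w := by
  have hc : DifferentiableAt ℝ (fderiv ℝ f) x := by
    have h := (f.smooth ⊤).fderiv_right (m := 1) (by
      calc ((1+1:ℕ) : WithTop ℕ∞) = ((((1+1:ℕ):ℕ∞)) : WithTop ℕ∞) := by norm_cast
        _ ≤ _ := WithTop.coe_le_coe.2 le_top)
    exact (h.differentiable one_ne_zero).differentiableAt
  rw [fderiv_clm_apply hc (differentiableAt_const w)]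
  simp

lemma D_comm (i j : Fin 2) (f : 𝓢(E2,ℝ)) : D i (D j f) = D j (D i f) := by
  ext x
  have hsymm : IsSymmSndFDerivAt ℝ (⇑f) x :=
    ((f.smooth ⊤).contDiffAt).isSymmSndFDerivAt (by
      rw [minSmoothness_of_isRCLikeNormedField]
      calc (2 : WithTop ℕ∞) = (((2:ℕ∞)) : WithTop ℕ∞) := by norm_cast
        _ ≤ _ := WithTop.coe_le_coe.2 le_top)
  simp only [D_apply]
  rw [show (⇑(D j f)) = fun y => fderiv ℝ f y (EuclideanSpace.single j 1) from rfl,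
    show (⇑(D i f)) = fun y => fderiv ℝ f y (EuclideanSpace.single i 1) from rfl,
    fderiv_fderiv_apply, fderiv_fderiv_apply]
  exact hsymm.eq _ _

lemma schw_decay3 (g : 𝓢(E2, ℝ)) : ∃ C : ℝ, 0 ≤ C ∧ ∀ y : E2, ‖g y‖ ≤ C * ((1+‖y‖)^3)⁻¹ := by
  refine ⟨2^3 * ((Finset.Iic ((3:ℕ),(0:ℕ))).sup (schwartzSeminormFamily ℝ E2 ℝ)) g,
    by positivity, fun y => ?_⟩
  have h := one_add_le_sup_seminorm_apply (𝕜 := ℝ) (m := ((3:ℕ),(0:ℕ))) (k := 3) (n := 0)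
    le_rfl le_rfl g y
  rw [norm_iteratedFDeriv_zero] at h
  have h1 : (0:ℝ) < (1+‖y‖)^3 := by positivity
  rw [mul_comm, ← le_div_iff₀ h1] at h
  simp only [div_eq_mul_inv] at h
  exact h

lemma integrable_inv_cube :
    Integrable (fun x : E2 => ((1+‖x‖)^3)⁻¹) := by
  have h := integrable_one_add_norm (E := E2) (μ := volume) (r := 3) (by simp; norm_num)
  refine h.congr (Filter.Eventually.of_forall fun x => ?_)
  have : ((1:ℝ)+‖x‖) ^ (-(3:ℝ)) = ((1+‖x‖)^(3:ℕ))⁻¹ := by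
    rw [Real.rpow_neg (by positivity)]
    rw [← Real.rpow_natCast]; norm_num
  simpa using this

lemma integral_pderiv_eq_zero (f : 𝓢(E2, ℝ)) (v : E2) :
    ∫ x : E2, LineDeriv.lineDerivOpCLM ℝ 𝓢(E2,ℝ) v f x = 0 := by
  set g := LineDeriv.lineDerivOpCLM ℝ 𝓢(E2,ℝ) v f with hg
  obtain ⟨C, hC0, hC⟩ := schw_decay3 g
  have hdiff : ∀ (x : E2) (t : ℝ), HasDerivAt (fun s : ℝ => f (x + s • v)) (g (x + t • v)) t := by
    intro x t
    have hφ : HasDerivAt (fun s : ℝ => x + s • v) v t := by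
      simpa using ((hasDerivAt_id t).smul_const v).const_add x
    have hf : DifferentiableAt ℝ f (x + t • v) :=
      (f.differentiable).differentiableAt
    exact (hf.hasFDerivAt.comp_hasDerivAt t hφ)
  have key := hasDerivAt_integral_of_dominated_loc_of_deriv_le (μ := volume)
      (F := fun (t : ℝ) (x : E2) => f (x + t • v)) (F' := fun (t : ℝ) (x : E2) => g (x + t • v))
      (x₀ := 0) (bound := fun x : E2 => (C * (1+‖v‖)^3) * ((1+‖x‖)^3)⁻¹) (ball_mem_nhds 0 one_pos)
      (Filter.Eventually.of_forall fun t =>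
        (f.continuous.comp (continuous_id.add continuous_const)).aestronglyMeasurable)
      (by simpa using ((f.integrable (μ := volume)).comp_add_right ((0:ℝ) • v)))
      ((g.continuous.comp (continuous_id.add continuous_const)).aestronglyMeasurable)
      (Filter.Eventually.of_forall fun x t ht => ?_) (integrable_inv_cube.const_mul _)
      (Filter.Eventually.of_forall fun x t _ => hdiff x t)
  · have hconst : (fun t : ℝ => ∫ x : E2, f (x + t • v)) = fun _ => ∫ x : E2, f x := by
      funext t
      exact integral_add_right_eq_self (fun x => f x) (t • v)
    have h0 : HasDerivAt (fun t : ℝ => ∫ x : E2, f (x + t • v)) 0 0 := by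
      rw [hconst]; exact hasDerivAt_const 0 _
    have := key.2.unique h0
    simpa using this
  · have h1 : 1 + ‖x‖ ≤ (1 + ‖x + t • v‖) * (1 + ‖v‖) := by
      have h2 : ‖x‖ ≤ ‖x + t • v‖ + ‖t • v‖ := by
        simpa using norm_add_le (x + t • v) (-(t • v))
      have h3 : ‖t • v‖ ≤ ‖v‖ := by
        rw [norm_smul]
        have ht' : |t| ≤ 1 := by
          have := mem_ball_iff_norm.1 ht
          simp only [sub_zero, Real.norm_eq_abs] at this; linarith
        simpa [Real.norm_eq_abs] using mul_le_of_le_one_left (norm_nonneg v) ht'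
      nlinarith [norm_nonneg (x + t • v), norm_nonneg v, norm_nonneg x]
    have h4 : (1+‖x‖)^3 ≤ (1+‖x + t • v‖)^3 * (1+‖v‖)^3 := by
      rw [← mul_pow]
      exact pow_le_pow_left₀ (by positivity) h1 3
    have hinv : ((1+‖x + t • v‖)^3)⁻¹ ≤ (1+‖v‖)^3 * ((1+‖x‖)^3)⁻¹ := by
      calc ((1+‖x + t • v‖)^3)⁻¹ ≤ ((1+‖x‖)^3 / (1+‖v‖)^3)⁻¹ := by
            apply inv_anti₀ (by positivity)
            rw [div_le_iff₀ (by positivity)]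
            exact h4
        _ = (1+‖v‖)^3 * ((1+‖x‖)^3)⁻¹ := by
            rw [inv_div, div_eq_mul_inv]
    calc ‖g (x + t • v)‖ ≤ C * ((1+‖x + t • v‖)^3)⁻¹ := hC _
      _ ≤ C * ((1+‖v‖)^3 * ((1+‖x‖)^3)⁻¹) := mul_le_mul_of_nonneg_left hinv hC0
      _ = (C * (1+‖v‖)^3) * ((1+‖x‖)^3)⁻¹ := by ring

def intS (f : 𝓢(E2,ℝ)) : ℝ := ∫ x : E2, f x

lemma intS_add (f g : 𝓢(E2,ℝ)) : intS (f + g) = intS f + intS g := by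
  simp only [intS, SchwartzMap.add_apply]
  exact integral_add f.integrable g.integrable

lemma intS_smul (c : ℝ) (f : 𝓢(E2,ℝ)) : intS (c • f) = c * intS f := by
  simp only [intS, SchwartzMap.smul_apply, smul_eq_mul]
  rw [integral_const_mul]

lemma intS_D (i : Fin 2) (f : 𝓢(E2,ℝ)) : intS (D i f) = 0 :=
  integral_pderiv_eq_zero f _

lemma ibp (i : Fin 2) (f g : 𝓢(E2,ℝ)) :
    intS (pmul (D i f) g) = - intS (pmul f (D i g)) := by
  have h := intS_D i (pmul f g)
  rw [D_pmul, intS_add] at h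
  linarith

def Lap (f : 𝓢(E2,ℝ)) : 𝓢(E2,ℝ) := D 0 (D 0 f) + D 1 (D 1 f)

lemma ibp2 (f g : 𝓢(E2,ℝ)) : intS (pmul (Lap f) g) = intS (pmul f (Lap g)) := by
  have key : ∀ i : Fin 2, intS (pmul (D i (D i f)) g) = intS (pmul f (D i (D i g))) := by
    intro i
    rw [ibp i (D i f) g, ibp i f (D i g), neg_neg]
  rw [show Lap f = D 0 (D 0 f) + D 1 (D 1 f) from rfl, pmul_add_left, intS_add,
    show Lap g = D 0 (D 0 g) + D 1 (D 1 g) from rfl, pmul_add_right, intS_add,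
    key 0, key 1]

def V (f : 𝓢(E2,ℝ)) : 𝓢(E2,ℝ) := xmul 0 (D 0 f) + xmul 1 (D 1 f)

lemma intS_xmul_D (j : Fin 2) (s : 𝓢(E2,ℝ)) : intS (xmul j (D j s)) = - intS s := by
  have h := intS_D j (xmul j s)
  rw [D_xmul, if_pos rfl, intS_add] at h
  linarith

lemma Lap_V (f : 𝓢(E2,ℝ)) : Lap (V f) = (Lap f + Lap f) + V (Lap f) := by
  have e00 : ∀ h : 𝓢(E2,ℝ), D 0 (xmul 0 h) = h + xmul 0 (D 0 h) := fun h => by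
    rw [D_xmul, if_pos rfl]
  have e01 : ∀ h : 𝓢(E2,ℝ), D 0 (xmul 1 h) = xmul 1 (D 0 h) := fun h => by
    rw [D_xmul, if_neg (by decide), zero_add]
  have e10 : ∀ h : 𝓢(E2,ℝ), D 1 (xmul 0 h) = xmul 0 (D 1 h) := fun h => by
    rw [D_xmul, if_neg (by decide), zero_add]
  have e11 : ∀ h : 𝓢(E2,ℝ), D 1 (xmul 1 h) = h + xmul 1 (D 1 h) := fun h => by
    rw [D_xmul, if_pos rfl]
  have h0 : D 0 (D 0 (V f)) = (D 0 (D 0 f) + D 0 (D 0 f))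
      + (xmul 0 (D 0 (D 0 (D 0 f))) + xmul 1 (D 0 (D 0 (D 1 f)))) := by
    rw [show V f = xmul 0 (D 0 f) + xmul 1 (D 1 f) from rfl, D_add, e00, e01, D_add, D_add,
      e00, e01]
    abel
  have h1 : D 1 (D 1 (V f)) = (D 1 (D 1 f) + D 1 (D 1 f))
      + (xmul 0 (D 1 (D 1 (D 0 f))) + xmul 1 (D 1 (D 1 (D 1 f)))) := by
    rw [show V f = xmul 0 (D 0 f) + xmul 1 (D 1 f) from rfl, D_add, e10, e11, D_add, D_add,
      e10, e11]
    abel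
  have c0 : D 1 (D 1 (D 0 f)) = D 0 (D 1 (D 1 f)) := by
    rw [D_comm 1 0 f, D_comm 1 0 (D 1 f)]
  have c1 : D 0 (D 0 (D 1 f)) = D 1 (D 0 (D 0 f)) := by
    rw [D_comm 0 1 f, D_comm 0 1 (D 0 f)]
  rw [show Lap (V f) = D 0 (D 0 (V f)) + D 1 (D 1 (V f)) from rfl, h0, h1, c0, c1,
    show Lap f = D 0 (D 0 f) + D 1 (D 1 f) from rfl,
    show V (D 0 (D 0 f) + D 1 (D 1 f)) = xmul 0 (D 0 (D 0 (D 0 f) + D 1 (D 1 f)))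
      + xmul 1 (D 1 (D 0 (D 0 f) + D 1 (D 1 f))) from rfl,
    D_add, D_add, xmul_add, xmul_add]
  abel

lemma intS_w_Vw (w : 𝓢(E2,ℝ)) : intS (pmul w (V w)) = - intS (pmul w w) := by
  have hDs : ∀ j : Fin 2, xmul j (D j (pmul w w))
      = xmul j (pmul w (D j w)) + xmul j (pmul w (D j w)) := by
    intro j
    rw [D_pmul, xmul_add, pmul_comm (D j w) w]
  have h : ∀ j : Fin 2, intS (xmul j (pmul w (D j w))) = - intS (pmul w w) / 2 := by
    intro j
    have := intS_xmul_D j (pmul w w)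
    rw [hDs j, intS_add] at this
    linarith
  rw [show V w = xmul 0 (D 0 w) + xmul 1 (D 1 w) from rfl, pmul_add_right, intS_add,
    pmul_xmul, pmul_xmul, h 0, h 1]
  ring

lemma lap_eq (f : 𝓢(E2,ℝ)) (x : E2) : lap (⇑f) x = Lap f x := by
  have key : ∀ v : E2, iteratedFDeriv ℝ 2 (⇑f) x ![v, v] = LineDeriv.lineDerivOpCLM ℝ 𝓢(E2,ℝ) v (LineDeriv.lineDerivOpCLM ℝ 𝓢(E2,ℝ) v f) x := by
    intro v
    rw [← SchwartzMap.iteratedLineDerivOp_eq_iteratedFDeriv]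
    rw [LineDeriv.iteratedLineDerivOp_succ_left]
    rw [show (Fin.tail ![v, v]) = ![v] by ext i; fin_cases i; rfl, LineDeriv.iteratedLineDerivOp_one]
    rfl
  rw [lap, Fin.sum_univ_two, key, key]
  rfl

end Stmt3Aux

open Stmt3Aux in
/-- For a smooth, radially symmetric, rapidly decaying `R : ℝ² → ℝ`,
`∫ Δ²(R²) · R · (R + ρ ∂_ρ R) dξ = (3/2) ∫ (Δ(R²))² dξ`; in particular the integral is
nonnegative, and strictly positive unless `R²` is harmonic. -/
theorem stmt3 (R : SchwartzMap E2 ℝ)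
    (hrad : ∀ x y : E2, ‖x‖ = ‖y‖ → R x = R y) :
    (∫ ξ : E2, lap (lap (fun x => (R x) ^ 2)) ξ *
        (R ξ * (R ξ + (inner ℝ ξ (gradient (fun x => R x) ξ) : ℝ)))
      = (3 / 2) * ∫ ξ : E2, (lap (fun x => (R x) ^ 2) ξ) ^ 2) ∧
    (0 ≤ ∫ ξ : E2, lap (lap (fun x => (R x) ^ 2)) ξ *
        (R ξ * (R ξ + (inner ℝ ξ (gradient (fun x => R x) ξ) : ℝ)))) ∧
    ((¬ ∀ x : E2, lap (fun x => (R x) ^ 2) x = 0) →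
      0 < ∫ ξ : E2, lap (lap (fun x => (R x) ^ 2)) ξ *
        (R ξ * (R ξ + (inner ℝ ξ (gradient (fun x => R x) ξ) : ℝ)))) := by
  have hu : (fun x => (R x) ^ 2) = ⇑(pmul R R) := by
    funext x; simp [sq]
  set u : SchwartzMap E2 ℝ := pmul R R with hudef
  have hlapu : lap (fun x => (R x)^2) = ⇑(Lap u) := by
    rw [hu]; funext x; exact lap_eq u x
  have hlaplap : lap (lap (fun x => (R x)^2)) = ⇑(Lap (Lap u)) := by
    rw [hlapu]; funext x; exact lap_eq (Lap u) x
  have hdecomp : ∀ ξ : E2, ξ = ξ 0 • EuclideanSpace.single (0 : Fin 2) (1:ℝ)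
      + ξ 1 • EuclideanSpace.single (1 : Fin 2) (1:ℝ) := by
    intro ξ; ext j
    fin_cases j <;>
      simp [EuclideanSpace.single_apply, PiLp.add_apply, PiLp.smul_apply]
  have hgrad : ∀ ξ : E2, (inner ℝ ξ (gradient (fun x => R x) ξ) : ℝ)
      = ξ 0 * (D 0 R) ξ + ξ 1 * (D 1 R) ξ := by
    intro ξ
    rw [real_inner_comm]
    rw [show gradient (fun x => R x) ξ
      = (InnerProductSpace.toDual ℝ E2).symm (fderiv ℝ (fun x => R x) ξ) from rfl]
    rw [InnerProductSpace.toDual_symm_apply]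
    rw [show (fderiv ℝ (fun x => R x) ξ) ξ
      = (fderiv ℝ (fun x => R x) ξ) (ξ 0 • EuclideanSpace.single (0 : Fin 2) (1:ℝ)
          + ξ 1 • EuclideanSpace.single (1 : Fin 2) (1:ℝ)) from congrArg _ (hdecomp ξ)]
    rw [ContinuousLinearMap.map_add, ContinuousLinearMap.map_smul, ContinuousLinearMap.map_smul]
    simp [D_apply]
  have hpt : ∀ ξ : E2, lap (lap (fun x => (R x)^2)) ξ *
      (R ξ * (R ξ + (inner ℝ ξ (gradient (fun x => R x) ξ) : ℝ)))
      = (pmul (Lap (Lap u)) (u + (2⁻¹:ℝ) • V u)) ξ := by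
    intro ξ
    rw [hlaplap, hgrad ξ]
    have hD0u : D 0 u ξ = (D 0 R) ξ * R ξ + R ξ * (D 0 R) ξ := by
      rw [hudef, D_pmul]; simp
    have hD1u : D 1 u ξ = (D 1 R) ξ * R ξ + R ξ * (D 1 R) ξ := by
      rw [hudef, D_pmul]; simp
    have hVu : (V u) ξ = D 0 u ξ * ξ 0 + D 1 u ξ * ξ 1 := by
      rw [show V u = xmul 0 (D 0 u) + xmul 1 (D 1 u) from rfl]
      simp
    simp only [pmul_apply, SchwartzMap.add_apply, SchwartzMap.smul_apply, smul_eq_mul]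
    rw [hVu, hD0u, hD1u, show u ξ = R ξ * R ξ from rfl]
    ring
  have hmain : (∫ ξ : E2, lap (lap (fun x => (R x)^2)) ξ *
      (R ξ * (R ξ + (inner ℝ ξ (gradient (fun x => R x) ξ) : ℝ))))
      = (3/2) * intS (pmul (Lap u) (Lap u)) := by
    have h1 : (∫ ξ : E2, lap (lap (fun x => (R x)^2)) ξ *
        (R ξ * (R ξ + (inner ℝ ξ (gradient (fun x => R x) ξ) : ℝ))))
        = intS (pmul (Lap (Lap u)) (u + (2⁻¹:ℝ) • V u)) :=
      integral_congr_ae (Filter.Eventually.of_forall hpt)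
    rw [h1, pmul_add_right, intS_add, pmul_smul_right, intS_smul,
      ibp2 (Lap u) u, ibp2 (Lap u) (V u), Lap_V u, pmul_add_right, intS_add,
      pmul_add_right, intS_add, intS_w_Vw (Lap u)]
    ring
  have hrhs : (∫ ξ : E2, (lap (fun x => (R x)^2) ξ)^2) = intS (pmul (Lap u) (Lap u)) := by
    refine integral_congr_ae (Filter.Eventually.of_forall fun ξ => ?_)
    rw [hlapu]
    simp [sq]
  have hnn : 0 ≤ intS (pmul (Lap u) (Lap u)) :=
    integral_nonneg fun x => mul_self_nonneg ((Lap u) x)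
  refine ⟨by rw [hmain, hrhs], by rw [hmain]; positivity, ?_⟩
  intro h
  push_neg at h
  obtain ⟨x₀, hx₀⟩ := h
  rw [show lap (fun x => (R x)^2) = ⇑(Lap u) from hlapu] at hx₀
  have hpos : 0 < intS (pmul (Lap u) (Lap u)) := by
    have hint : Integrable (fun x : E2 => (Lap u) x * (Lap u) x) volume :=
      (pmul (Lap u) (Lap u)).integrable
    have hsupp : {x : E2 | (Lap u) x ≠ 0} ⊆ Function.support fun x => (Lap u) x * (Lap u) x := by
      intro x hx
      exact mul_self_ne_zero.2 hx
    have hopen : IsOpen {x : E2 | (Lap u) x ≠ 0} :=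
      isOpen_ne_fun (Lap u).continuous continuous_const
    have hmeas : 0 < volume (Function.support fun x => (Lap u) x * (Lap u) x) :=
      lt_of_lt_of_le (hopen.measure_pos volume ⟨x₀, hx₀⟩) (measure_mono hsupp)
    have := (integral_pos_iff_support_of_nonneg
      (fun x => mul_self_nonneg ((Lap u) x)) hint).2 hmeas
    exact this
  rw [hmain]
  positivity
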